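/- Let Q : ℕ → ℝ satisfy Q(n) = 2·Q(n/2) + Q_MT(n/2) + (n/2)·Q_2D(n/2) for n > 1 a power of 2 with Q(1) = O(1), where Q_2D(n) ≤ C·(n²/(BM) + P^{1/2} n (log n)/B + P (log n)²) and Q_MT(n) ≤ C·(n²/B + P (log n)²). Then Q(n) = O(n³/(BM) + P^{1/2} n² (log n)/B + P·n·(log n)²). -/

import Mathlib

set_option maxHeartbeats 1000000

-- auxiliary: i^2 ≤ 2 * 2^i over ℝ
lemma aux_sq_le (i : ℕ) : ((i:ℝ))^2 ≤ 2 * 2^i := by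
  have h : i^2 ≤ 2 * 2^i := by
    induction i with
    | zero => norm_num
    | succ n ih =>
      have h1 : n < 2^n := Nat.lt_two_pow_self
      ring_nf
      ring_nf at ih
      nlinarith [ih, h1]
  calc ((i:ℝ))^2 = ((i^2 : ℕ) : ℝ) := by push_cast; ring
    _ ≤ ((2 * 2^i : ℕ) : ℝ) := by exact_mod_cast Nat.cast_le.mpr h
    _ = 2 * 2^i := by push_cast; ring

/-- Parallel cache complexity of protein accordion folding:
`Q(n) = 2Q(n/2) + Q_MT(n/2) + (n/2)Q_2D(n/2)` (encoded on powers of 2 by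
`q i = Q(2^i)`) gives `Q(n) = O(n³/(BM) + P^{1/2} n² (log n)/B + P·n·(log n)²)`. -/
theorem stmt15 (B M P C : ℝ) (hB : 1 ≤ B) (hM : 1 ≤ M) (hP : 1 ≤ P) (hC : 1 ≤ C)
    (Q2D QMT : ℕ → ℝ)
    (h2D : ∀ n : ℕ, 1 ≤ n → Q2D n ≤ C * ((n : ℝ) ^ 2 / (B * M)
      + P ^ ((1 : ℝ) / 2) * (n : ℝ) * Real.log n / B
      + P * (Real.log n) ^ 2))
    (hMT : ∀ n : ℕ, 1 ≤ n → QMT n ≤ C * ((n : ℝ) ^ 2 / B + P * (Real.log n) ^ 2))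
    (q : ℕ → ℝ)
    (hrec : ∀ i : ℕ, q (i + 1) =
      2 * q i + QMT (2 ^ i) + (2 : ℝ) ^ i * Q2D (2 ^ i)) :
    ∃ C' > 0, ∀ i : ℕ,
      q i ≤ C' * (((2 : ℝ) ^ i) ^ 3 / (B * M)
        + P ^ ((1 : ℝ) / 2) * ((2 : ℝ) ^ i) ^ 2 * Real.log ((2 : ℝ) ^ i) / B
        + P * (2 : ℝ) ^ i * (Real.log ((2 : ℝ) ^ i)) ^ 2) := by
  have hB0 : (0:ℝ) < B := by linarith
  have hM0 : (0:ℝ) < M := by linarith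
  have hBM : (0:ℝ) < B * M := by positivity
  have hP0 : (0:ℝ) < P := by linarith
  obtain ⟨sp, hsp⟩ : ∃ x : ℝ, x = P ^ ((1:ℝ)/2) := ⟨_, rfl⟩
  rw [← hsp] at h2D ⊢
  have hsp1 : 1 ≤ sp := hsp ▸ Real.one_le_rpow hP (by norm_num)
  have hspsq : sp * sp = P := by
    rw [hsp, ← Real.rpow_add hP0]; norm_num
  have hlog2pos : 0 < Real.log 2 := Real.log_pos (by norm_num)
  have hlog2le : Real.log 2 ≤ 1 := by
    have := Real.log_le_sub_one_of_pos (show (0:ℝ) < 2 by norm_num)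
    linarith
  obtain ⟨C1, hC1⟩ : ∃ x : ℝ, x = C + |q 0| * B * M := ⟨_, rfl⟩
  have hC1C : C ≤ C1 := by
    have h := mul_nonneg (mul_nonneg (abs_nonneg (q 0)) hB0.le) hM0.le
    linarith [h]
  have hC1pos : 0 < C1 := by linarith
  -- H i is the inductive bound
  have key : ∀ i : ℕ, q i ≤ C1 * (((2:ℝ)^i)^3 / (B*M)
      + sp * ((2:ℝ)^i)^2 * (i:ℝ) / B + P * (2:ℝ)^i * (i:ℝ)^3) := by
    intro i
    induction i with
    | zero =>
      have hEq : C1 * (((2:ℝ)^0)^3 / (B*M) + sp * ((2:ℝ)^0)^2 * ((0:ℕ):ℝ) / B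
          + P * (2:ℝ)^0 * ((0:ℕ):ℝ)^3) = C/(B*M) + |q 0| := by
        rw [hC1]; push_cast; field_simp; ring
      rw [hEq]
      have h2 : 0 ≤ C/(B*M) := by positivity
      linarith [le_abs_self (q 0)]
    | succ i ih =>
      obtain ⟨L, hLdef⟩ : ∃ x : ℝ, x = (i:ℝ) * Real.log 2 := ⟨_, rfl⟩
      have hL0 : 0 ≤ L := by rw [hLdef]; positivity
      have hLi : L ≤ (i:ℝ) := by
        rw [hLdef]
        calc (i:ℝ) * Real.log 2 ≤ (i:ℝ) * 1 :=
          mul_le_mul_of_nonneg_left hlog2le (Nat.cast_nonneg i)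
        _ = (i:ℝ) := mul_one _
      have hcastpow : ((2^i : ℕ) : ℝ) = (2:ℝ)^i := by push_cast; ring
      have hlogpow : Real.log ((2:ℝ)^i) = L := by
        rw [Real.log_pow, hLdef]
      have h1 := hMT (2^i) (Nat.one_le_two_pow)
      have h2 := h2D (2^i) (Nat.one_le_two_pow)
      rw [hcastpow] at h1 h2
      rw [hlogpow] at h1 h2
      have hp2 : (0:ℝ) ≤ (2:ℝ)^i := by positivity
      have h2' : (2:ℝ)^i * Q2D (2^i) ≤
          (2:ℝ)^i * (C * (((2:ℝ)^i)^2/(B*M) + sp * (2:ℝ)^i * L / B + P * L^2)) :=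
        mul_le_mul_of_nonneg_left h2 hp2
      have hi2 := aux_sq_le i
      have hu : (0:ℝ) ≤ 1/B := by positivity
      have hv : (0:ℝ) ≤ 1/(B*M) := by positivity
      have hCnn : (0:ℝ) ≤ C := by linarith
      have hin : (0:ℝ) ≤ (i:ℝ) := Nat.cast_nonneg i
      have hLL : L * L ≤ (i:ℝ) * (i:ℝ) := mul_le_mul hLi hLi hL0 hin
      have hL2i : L^2 ≤ (i:ℝ)^2 := by nlinarith [hLL, hL0, hin]
      have hL2 : L^2 ≤ 2 * 2^i := le_trans hL2i hi2
      have e1 : C * (((2:ℝ)^i)^2 * (1/B)) ≤ C1 * (sp * ((2:ℝ)^i)^2 * 4 * (1/B)) := by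
        have hA : (0:ℝ) ≤ 4 * C1 * sp - C := by
          have := mul_nonneg hC1pos.le (sub_nonneg.mpr hsp1)
          linarith [this]
        have hX : (0:ℝ) ≤ ((2:ℝ)^i)^2 * (1/B) := by positivity
        linarith [mul_nonneg hA hX]
      have e2 : C * (P * L^2) ≤ C1 * (P * (2:ℝ)^i * 2) := by
        have h1a : (0:ℝ) ≤ (C1 - C) * (P * L^2) :=
          mul_nonneg (by linarith) (by positivity)
        have h1b : (0:ℝ) ≤ C1 * P * (2 * 2^i - L^2) :=
          mul_nonneg (by positivity) (by linarith)
        linarith [h1a, h1b]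
      have e3 : C * ((2:ℝ)^i * (((2:ℝ)^i)^2 * (1/(B*M)))) ≤
          C1 * (6 * ((2:ℝ)^i)^3 * (1/(B*M))) := by
        have hA : (0:ℝ) ≤ 6 * C1 - C := by linarith
        have hX : (0:ℝ) ≤ ((2:ℝ)^i)^3 * (1/(B*M)) := by positivity
        linarith [mul_nonneg hA hX]
      have e4 : C * ((2:ℝ)^i * (sp * (2:ℝ)^i * L * (1/B))) ≤
          C1 * (sp * ((2:ℝ)^i)^2 * (2*(i:ℝ)) * (1/B)) := by
        have hA : (0:ℝ) ≤ 2 * C1 * (i:ℝ) - C * L := by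
          have b1 : C * L ≤ C * (i:ℝ) := mul_le_mul_of_nonneg_left hLi hCnn
          have b2 : (0:ℝ) ≤ (2 * C1 - C) * (i:ℝ) := mul_nonneg (by linarith) hin
          linarith [b1, b2]
        have hX : (0:ℝ) ≤ sp * ((2:ℝ)^i)^2 * (1/B) := by positivity
        linarith [mul_nonneg hA hX]
      have e5 : C * ((2:ℝ)^i * (P * L^2)) ≤ C1 * (P * (2:ℝ)^i * (6*(i:ℝ)^2)) := by
        have hA : (0:ℝ) ≤ 6 * C1 * (i:ℝ)^2 - C * L^2 := by
          have b1 : C * L^2 ≤ C * (i:ℝ)^2 := mul_le_mul_of_nonneg_left hL2i hCnn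
          have b2 : (0:ℝ) ≤ (6 * C1 - C) * (i:ℝ)^2 :=
            mul_nonneg (by linarith) (sq_nonneg _)
          linarith [b1, b2]
        have hX : (0:ℝ) ≤ P * (2:ℝ)^i := by positivity
        linarith [mul_nonneg hA hX]
      have e6 : (0:ℝ) ≤ C1 * (P * (2:ℝ)^i * (6*(i:ℝ))) := by positivity
      have hdiff : ((2:ℝ)^(i+1))^3 / (B*M) + sp * ((2:ℝ)^(i+1))^2 * ((i+1 : ℕ):ℝ) / B
            + P * (2:ℝ)^(i+1) * ((i+1 : ℕ):ℝ)^3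
          = 2 * (((2:ℝ)^i)^3 / (B*M) + sp * ((2:ℝ)^i)^2 * (i:ℝ) / B + P * (2:ℝ)^i * (i:ℝ)^3) +
          (6 * ((2:ℝ)^i)^3 * (1/(B*M)) + sp * ((2:ℝ)^i)^2 * (2*(i:ℝ)+4) * (1/B)
            + P * (2:ℝ)^i * (6*(i:ℝ)^2 + 6*(i:ℝ) + 2)) := by
        push_cast
        ring
      rw [hrec i, hdiff, mul_add]
      have h1' : QMT (2^i) ≤ C * (((2:ℝ)^i)^2 * (1/B)) + C * (P * L^2) := by
        calc QMT (2^i) ≤ C * (((2:ℝ)^i)^2/B + P * L^2) := h1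
          _ = C * (((2:ℝ)^i)^2 * (1/B)) + C * (P * L^2) := by ring
      have h2'' : (2:ℝ)^i * Q2D (2^i) ≤
          C * ((2:ℝ)^i * (((2:ℝ)^i)^2 * (1/(B*M))))
          + C * ((2:ℝ)^i * (sp * (2:ℝ)^i * L * (1/B)))
          + C * ((2:ℝ)^i * (P * L^2)) := by
        calc (2:ℝ)^i * Q2D (2^i) ≤
            (2:ℝ)^i * (C * (((2:ℝ)^i)^2/(B*M) + sp * (2:ℝ)^i * L / B + P * L^2)) := h2'
          _ = C * ((2:ℝ)^i * (((2:ℝ)^i)^2 * (1/(B*M))))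
            + C * ((2:ℝ)^i * (sp * (2:ℝ)^i * L * (1/B)))
            + C * ((2:ℝ)^i * (P * L^2)) := by ring
      linarith [e1, e2, e3, e4, e5, e6, h1', h2'', ih]
  -- conversion to the target bound
  obtain ⟨c, hc⟩ : ∃ x : ℝ, x = 1 + 1/Real.log 2 + 2 * sp * B / Real.log 2 := ⟨_, rfl⟩
  have hsp0 : (0:ℝ) < sp := lt_of_lt_of_le one_pos hsp1
  have hcpos : 0 < c := by rw [hc]; positivity
  refine ⟨C1 * c, by positivity, fun i => ?_⟩
  have hlogpow : Real.log ((2:ℝ)^i) = (i:ℝ) * Real.log 2 := by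
    rw [Real.log_pow]
  rw [hlogpow]
  obtain ⟨L, hLdef⟩ : ∃ x : ℝ, x = (i:ℝ) * Real.log 2 := ⟨_, rfl⟩
  rw [← hLdef]
  have hG1n : (0:ℝ) ≤ ((2:ℝ)^i)^3 / (B*M) := by positivity
  have hG2n : (0:ℝ) ≤ sp * ((2:ℝ)^i)^2 * L / B := by
    rw [hLdef]; positivity
  have hG3n : (0:ℝ) ≤ P * (2:ℝ)^i * L^2 := by positivity
  have hHG : ((2:ℝ)^i)^3 / (B*M) + sp * ((2:ℝ)^i)^2 * (i:ℝ) / B + P * (2:ℝ)^i * (i:ℝ)^3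
      ≤ c * (((2:ℝ)^i)^3 / (B*M) + sp * ((2:ℝ)^i)^2 * L / B + P * (2:ℝ)^i * L^2) := by
    have t2 : sp * ((2:ℝ)^i)^2 * (i:ℝ) / B
        = (1/Real.log 2) * (sp * ((2:ℝ)^i)^2 * L / B) := by
      rw [hLdef]; field_simp
    have t3 : P * (2:ℝ)^i * (i:ℝ)^3
        ≤ (2 * sp * B / Real.log 2) * (sp * ((2:ℝ)^i)^2 * L / B) := by
      have hrw : (2 * sp * B / Real.log 2) * (sp * ((2:ℝ)^i)^2 * L / B)
          = 2 * (sp * sp) * ((2:ℝ)^i)^2 * (i:ℝ) := by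
        rw [hLdef]; field_simp
      rw [hrw, hspsq]
      have hi2 := aux_sq_le i
      have hfac : (0:ℝ) ≤ P * (2:ℝ)^i * (i:ℝ) := by positivity
      have h := mul_le_mul_of_nonneg_left hi2 hfac
      nlinarith [h]
    have hl2inv : (0:ℝ) ≤ 1/Real.log 2 := by positivity
    have hspB : (0:ℝ) ≤ 2 * sp * B / Real.log 2 := by positivity
    have hexp : c * (((2:ℝ)^i)^3 / (B*M) + sp * ((2:ℝ)^i)^2 * L / B + P * (2:ℝ)^i * L^2)
        = (((2:ℝ)^i)^3 / (B*M) + sp * ((2:ℝ)^i)^2 * L / B + P * (2:ℝ)^i * L^2)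
        + (1/Real.log 2) * (((2:ℝ)^i)^3 / (B*M))
        + (1/Real.log 2) * (sp * ((2:ℝ)^i)^2 * L / B)
        + (1/Real.log 2) * (P * (2:ℝ)^i * L^2)
        + (2 * sp * B / Real.log 2) * (((2:ℝ)^i)^3 / (B*M))
        + (2 * sp * B / Real.log 2) * (sp * ((2:ℝ)^i)^2 * L / B)
        + (2 * sp * B / Real.log 2) * (P * (2:ℝ)^i * L^2) := by
      rw [hc]; ring
    have n1 : (0:ℝ) ≤ (1/Real.log 2) * (((2:ℝ)^i)^3 / (B*M)) := mul_nonneg hl2inv hG1n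
    have n2 : (0:ℝ) ≤ (2 * sp * B / Real.log 2) * (((2:ℝ)^i)^3 / (B*M)) :=
      mul_nonneg hspB hG1n
    have n3 : (0:ℝ) ≤ (1/Real.log 2) * (P * (2:ℝ)^i * L^2) := mul_nonneg hl2inv hG3n
    have n4 : (0:ℝ) ≤ (2 * sp * B / Real.log 2) * (P * (2:ℝ)^i * L^2) :=
      mul_nonneg hspB hG3n
    rw [t2, hexp]
    linarith [t3, n1, n2, n3, n4, hG2n, hG3n]
  calc q i ≤ C1 * (((2:ℝ)^i)^3 / (B*M) + sp * ((2:ℝ)^i)^2 * (i:ℝ) / B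
      + P * (2:ℝ)^i * (i:ℝ)^3) := key i
    _ ≤ C1 * (c * (((2:ℝ)^i)^3 / (B*M) + sp * ((2:ℝ)^i)^2 * L / B + P * (2:ℝ)^i * L^2)) :=
      mul_le_mul_of_nonneg_left hHG hC1pos.le
    _ = C1 * c * (((2:ℝ)^i)^3 / (B*M) + sp * ((2:ℝ)^i)^2 * L / B + P * (2:ℝ)^i * L^2) := by
      ring
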